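/- Let 0 < γ ≤ 1 and 0 < μ ≤ 1 be real numbers. If μ ≥ √2/2, then for every γ ∈ (0,1], Δ_ZW2(γ,μ) ≤ Δ_ZW1(γ,μ), where Δ_ZW1(γ,μ) = 2/μ + μ/(γ(μ+γ)) − 1 and Δ_ZW2(γ,μ) = 1/γ + 1/μ − 1 + 2γ²(1−μ)/(μ(γ(1−μ)(γ+μ) + μ²)). -/

import Mathlib

/-- If `μ ≥ √2/2`, then `Δ_ZW2(γ,μ) ≤ Δ_ZW1(γ,μ)` for every `γ ∈ (0,1]`. -/
theorem zw2_beats_zw1_of_large_mu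
    (μ : ℝ) (hμ0 : 0 < μ) (hμ1 : μ ≤ 1) (h : μ ≥ Real.sqrt 2 / 2) :
    ∀ γ : ℝ, 0 < γ → γ ≤ 1 →
      1 / γ + 1 / μ - 1 + 2 * γ ^ 2 * (1 - μ) / (μ * (γ * (1 - μ) * (γ + μ) + μ ^ 2))
        ≤ 2 / μ + μ / (γ * (μ + γ)) - 1 := by
  intro γ hγ hγ1
  have hs : (Real.sqrt 2) ^ 2 = 2 := Real.sq_sqrt (by norm_num)
  have hμ2 : 1 / 2 ≤ μ ^ 2 := by nlinarith [Real.sqrt_nonneg 2]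
  have h1μ : 0 ≤ 1 - μ := by linarith
  have hD : 0 < γ * (1 - μ) * (γ + μ) + μ ^ 2 := by
    have : 0 ≤ γ * (1 - μ) * (γ + μ) := by positivity
    nlinarith
  have hμγ : 0 < μ + γ := by linarith
  -- key inequality: γ(1-μ)(γ+μ) ≤ μ²
  have hkey : γ * (1 - μ) * (γ + μ) ≤ μ ^ 2 := by
    nlinarith [mul_nonneg (mul_nonneg h1μ (by linarith : (0:ℝ) ≤ 1 - γ))
      (by linarith : (0:ℝ) ≤ 1 + γ + μ)]
  have step : 2 * γ ^ 2 * (1 - μ) / (μ * (γ * (1 - μ) * (γ + μ) + μ ^ 2))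
      ≤ γ / (μ * (μ + γ)) := by
    rw [div_le_div_iff₀ (by positivity) (by positivity)]
    nlinarith [mul_le_mul_of_nonneg_left hkey (mul_pos hγ hμ0).le]
  have eq1 : 1 / γ - μ / (γ * (μ + γ)) = 1 / (μ + γ) := by
    field_simp
    ring
  have eq2 : 1 / μ - 1 / (μ + γ) = γ / (μ * (μ + γ)) := by
    field_simp
    ring
  have eq3 : 2 / μ = 1 / μ + 1 / μ := by ring
  linarith [step, eq1, eq2, eq3]
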